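/- For every integer k ≥ 1, the number n_k = 2^{2^k − 1} is super-imperfect (i.e., satisfies 2·β(β(n_k)) = n_k) if and only if k ∈ {1, 2, 3, 4, 5}. -/

import Mathlib

/-- The Liouville function `λ(n) = (-1)^Ω(n)`. -/
def lam (n : ℕ) : ℤ := (-1) ^ (ArithmeticFunction.cardFactors n)

/-- The alternating sum-of-divisors function `β(n) = ∑_{d ∣ n} d · λ(n/d)`. -/
def beta (n : ℕ) : ℤ := ∑ d ∈ n.divisors, (d : ℤ) * lam (n / d)

/-- The natural-number version of `β` (the values of `β` are nonnegative). -/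
def betaN (n : ℕ) : ℕ := (beta n).toNat

open Finset

lemma lam_one : lam 1 = 1 := by simp [lam]

lemma lam_prime {p : ℕ} (hp : p.Prime) : lam p = -1 := by
  simp [lam, ArithmeticFunction.cardFactors_apply_prime hp]

/-- Liouville as an arithmetic function. -/
def liouA : ArithmeticFunction ℤ := ⟨fun n => if n = 0 then 0 else lam n, by simp⟩

lemma liouA_apply {n : ℕ} (hn : n ≠ 0) : liouA n = lam n := if_neg hn

lemma liouA_zero : liouA 0 = 0 := rfl

lemma liouA_mult : liouA.IsMultiplicative := by
  constructor
  · rw [liouA_apply one_ne_zero, lam_one]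
  · intro m n h
    rcases eq_or_ne m 0 with rfl | hm
    · have hn : n = 1 := (Nat.coprime_zero_left n).mp h
      subst hn
      simp [liouA_zero, liouA_apply one_ne_zero, lam_one]
    rcases eq_or_ne n 0 with rfl | hn
    · simp [liouA_zero]
    rw [liouA_apply (Nat.mul_ne_zero hm hn), liouA_apply hm, liouA_apply hn]
    unfold lam
    rw [ArithmeticFunction.cardFactors_mul hm hn, pow_add]

/-- `β` as an arithmetic function: Dirichlet convolution of `id` and `λ`. -/
def betaA : ArithmeticFunction ℤ :=
  ((ArithmeticFunction.id : ArithmeticFunction ℕ) : ArithmeticFunction ℤ) * liouA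

lemma beta_eq (n : ℕ) : beta n = betaA n := by
  rcases eq_or_ne n 0 with rfl | hn
  · simp [beta, betaA]
  rw [betaA, ArithmeticFunction.mul_apply, Nat.sum_divisorsAntidiagonal
    (f := fun a b =>
      ((ArithmeticFunction.id : ArithmeticFunction ℕ) : ArithmeticFunction ℤ) a * liouA b)]
  unfold beta
  refine Finset.sum_congr rfl fun d hd => ?_
  rw [Nat.mem_divisors] at hd
  have hd0 : n / d ≠ 0 := by
    have h1 : 0 < d := Nat.pos_of_dvd_of_pos hd.1 (Nat.pos_of_ne_zero hn)
    have := Nat.div_pos (Nat.le_of_dvd (Nat.pos_of_ne_zero hn) hd.1) h1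
    omega
  rw [liouA_apply hd0, ArithmeticFunction.natCoe_apply, ArithmeticFunction.id_apply]

lemma betaA_mult : betaA.IsMultiplicative :=
  (ArithmeticFunction.isMultiplicative_id.natCast).mul liouA_mult

lemma beta_mult {m n : ℕ} (h : Nat.Coprime m n) : beta (m * n) = beta m * beta n := by
  rw [beta_eq, beta_eq, beta_eq]
  exact betaA_mult.map_mul_of_coprime h

lemma beta_one : beta 1 = 1 := by simp [beta, lam]

lemma beta_prime {p : ℕ} (hp : p.Prime) : beta p = (p : ℤ) - 1 := by
  unfold beta
  rw [hp.divisors, Finset.sum_pair hp.one_lt.ne]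
  rw [Nat.div_one, Nat.div_self hp.pos, lam_one, lam_prime hp]
  ring

lemma beta_two_pow (n : ℕ) :
    beta (2 ^ n) = ∑ i ∈ range (n + 1), (2 : ℤ) ^ i * (-1) ^ (n - i) := by
  unfold beta
  rw [Nat.sum_divisors_prime_pow (f := fun d => (d : ℤ) * lam (2 ^ n / d)) Nat.prime_two]
  refine Finset.sum_congr rfl fun i hi => ?_
  rw [Finset.mem_range] at hi
  have hle : i ≤ n := by omega
  rw [Nat.pow_div hle (by norm_num)]
  unfold lam
  rw [ArithmeticFunction.cardFactors_apply_prime_pow Nat.prime_two]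
  push_cast
  ring

lemma beta_two_pow_succ (n : ℕ) : beta (2 ^ (n + 1)) = 2 ^ (n + 1) - beta (2 ^ n) := by
  rw [beta_two_pow, beta_two_pow, Finset.sum_range_succ]
  have h : ∀ i ∈ range (n + 1), (2 : ℤ) ^ i * (-1) ^ (n + 1 - i)
      = -((2 : ℤ) ^ i * (-1) ^ (n - i)) := by
    intro i hi
    rw [Finset.mem_range] at hi
    have he : n + 1 - i = (n - i) + 1 := by omega
    rw [he, pow_succ]
    ring
  rw [Finset.sum_congr rfl h, Finset.sum_neg_distrib]
  simp
  ring

lemma beta_two_pow_odd (m : ℕ) : 3 * beta (2 ^ (2 * m + 1)) = 2 ^ (2 * m + 2) - 1 := by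
  induction m with
  | zero => rw [beta_two_pow]; decide
  | succ m ih =>
      have h2 : beta (2 ^ (2 * m + 1 + 1)) = 2 ^ (2 * m + 1 + 1) - beta (2 ^ (2 * m + 1)) :=
        beta_two_pow_succ _
      have h3 : beta (2 ^ (2 * m + 1 + 1 + 1))
          = 2 ^ (2 * m + 1 + 1 + 1) - beta (2 ^ (2 * m + 1 + 1)) := beta_two_pow_succ _
      rw [show 2 * (m + 1) + 1 = 2 * m + 1 + 1 + 1 from by ring, h3, h2]
      rw [show 2 * (m + 1) + 2 = (2 * m + 2) + 2 from by ring]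
      have e1 : (2 : ℤ) ^ (2 * m + 1 + 1 + 1) = 2 * 2 ^ (2 * m + 2) := by
        rw [show 2 * m + 1 + 1 + 1 = (2 * m + 2) + 1 from by ring, pow_succ]; ring
      have e2 : (2 : ℤ) ^ (2 * m + 1 + 1) = 2 ^ (2 * m + 2) := by norm_num
      have e3 : (2 : ℤ) ^ ((2 * m + 2) + 2) = 4 * 2 ^ (2 * m + 2) := by
        rw [pow_succ, pow_succ]; ring
      rw [e1, e2, e3]
      linarith [ih]

lemma betaN_key (k : ℕ) (hk : 1 ≤ k) :
    betaN (2 ^ (2 ^ k - 1)) = (2 ^ 2 ^ k - 1) / 3 ∧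
      (beta (2 ^ (2 ^ k - 1)) : ℤ) = (((2 ^ 2 ^ k - 1) / 3 : ℕ) : ℤ) := by
  have hpk : 2 ^ k = 2 * 2 ^ (k - 1) := by
    rw [← pow_succ']
    congr 1
    omega
  have h1 : (1 : ℕ) ≤ 2 ^ (k - 1) := Nat.one_le_two_pow
  have hodd : 2 ^ k - 1 = 2 * (2 ^ (k - 1) - 1) + 1 := by omega
  have h3b : 3 * beta (2 ^ (2 ^ k - 1)) = 2 ^ 2 ^ k - 1 := by
    rw [hodd]
    have := beta_two_pow_odd (2 ^ (k - 1) - 1)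
    rw [show 2 * (2 ^ (k - 1) - 1) + 2 = 2 ^ k from by omega] at this
    exact this
  have hdvd3 : (3 : ℕ) ∣ 2 ^ 2 ^ k - 1 := by
    have h4 : (3 : ℕ) ∣ 4 ^ 2 ^ (k - 1) - 1 := by
      simpa using Nat.sub_dvd_pow_sub_pow 4 1 (2 ^ (k - 1))
    rwa [show (4 : ℕ) = 2 ^ 2 from rfl, ← pow_mul,
      show 2 * 2 ^ (k - 1) = 2 ^ k from hpk.symm] at h4
  have hM : 3 * ((2 ^ 2 ^ k - 1) / 3) = 2 ^ 2 ^ k - 1 := Nat.mul_div_cancel' hdvd3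
  have hcast : (3 : ℤ) * (((2 ^ 2 ^ k - 1) / 3 : ℕ) : ℤ) = 2 ^ 2 ^ k - 1 := by
    have h1 := congrArg (fun x : ℕ => (x : ℤ)) hM
    simp only [Nat.cast_mul, Nat.cast_ofNat, Nat.cast_sub (Nat.one_le_two_pow),
      Nat.cast_pow, Nat.cast_one] at h1
    exact h1
  have hbeq : beta (2 ^ (2 ^ k - 1)) = (((2 ^ 2 ^ k - 1) / 3 : ℕ) : ℤ) := by
    have h2 : (3 : ℤ) * beta (2 ^ (2 ^ k - 1)) = 3 * (((2 ^ 2 ^ k - 1) / 3 : ℕ) : ℤ) := by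
      rw [h3b, hcast]
    exact mul_left_cancel₀ (by norm_num) h2
  refine ⟨?_, hbeq⟩
  rw [betaN, hbeq, Int.toNat_natCast]

theorem stmt_19 (k : ℕ) (hk : 1 ≤ k) :
    2 * betaN (betaN (2 ^ (2 ^ k - 1))) = 2 ^ (2 ^ k - 1) ↔
      k ∈ ({1, 2, 3, 4, 5} : Finset ℕ) := by
  obtain ⟨hb1, -⟩ := betaN_key k hk
  rw [hb1]
  constructor
  · intro h
    by_contra hmem
    have hk6 : 6 ≤ k := by
      simp only [Finset.mem_insert, Finset.mem_singleton] at hmem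
      omega
    set M : ℕ := (2 ^ 2 ^ k - 1) / 3 with hMdef
    -- the equation forces beta M = 2 ^ (2 ^ k - 2)
    have h64 : (64 : ℕ) ≤ 2 ^ k := by
      calc (64 : ℕ) = 2 ^ 6 := by norm_num
      _ ≤ 2 ^ k := Nat.pow_le_pow_right (by norm_num) hk6
    have hsplit : (2 : ℕ) ^ (2 ^ k - 1) = 2 * 2 ^ (2 ^ k - 2) := by
      rw [show 2 ^ k - 1 = (2 ^ k - 2) + 1 from by omega, pow_succ]
      ring
    rw [hsplit] at h
    have htn : (beta M).toNat = 2 ^ (2 ^ k - 2) :=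
      Nat.eq_of_mul_eq_mul_left (by norm_num) h
    have hnn : beta M = (2 : ℤ) ^ (2 ^ k - 2) := by
      rcases le_or_gt 0 (beta M) with h0 | h0
      · rw [← Int.toNat_of_nonneg h0, htn]
        push_cast
        ring
      · rw [Int.toNat_of_nonpos h0.le] at htn
        have hpos : 0 < (2 : ℕ) ^ (2 ^ k - 2) := pow_pos (by norm_num) _
        omega
    -- p = 6700417 divides M exactly once
    have hp : Nat.Prime 6700417 := by norm_num
    have hM3 : 3 * M = 2 ^ 2 ^ k - 1 := by
      apply Nat.mul_div_cancel'
      have h4 : (3 : ℕ) ∣ 4 ^ 2 ^ (k - 1) - 1 := by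
        simpa using Nat.sub_dvd_pow_sub_pow 4 1 (2 ^ (k - 1))
      rwa [show (4 : ℕ) = 2 ^ 2 from rfl, ← pow_mul,
        show 2 * 2 ^ (k - 1) = 2 ^ k from by
          rw [← pow_succ']; congr 1; omega] at h4
    have hd2 : (2 ^ 64 - 1 : ℕ) ∣ 2 ^ 2 ^ k - 1 := by
      have hek : 2 ^ k = 64 * 2 ^ (k - 6) := by
        rw [show (64 : ℕ) = 2 ^ 6 from rfl, ← pow_add]
        congr 1
        omega
      have := Nat.sub_dvd_pow_sub_pow (2 ^ 64) 1 (2 ^ (k - 6))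
      rwa [one_pow, ← pow_mul, ← hek] at this
    have hdM : (6700417 : ℕ) ∣ M := by
      have hd1 : (6700417 : ℕ) ∣ 2 ^ 64 - 1 := by norm_num
      have : (6700417 : ℕ) ∣ 3 * M := hM3 ▸ hd1.trans hd2
      exact (Nat.Coprime.dvd_of_dvd_mul_left (by norm_num) this)
    have hsq : ¬ (6700417 ^ 2 : ℕ) ∣ M := by
      intro hc
      have hc2 : (6700417 ^ 2 : ℕ) ∣ 2 ^ 2 ^ k - 1 :=
        hM3 ▸ hc.trans (dvd_mul_left M 3)
      have hcop2 : Nat.Coprime 2 (6700417 ^ 2) := by norm_num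
      set u : (ZMod (6700417 ^ 2))ˣ := ZMod.unitOfCoprime 2 hcop2 with hu_def
      have hu2 : ((2 : ℕ) : ZMod (6700417 ^ 2)) ^ 2 ^ k = 1 := by
        have h1 : (((2 : ℕ) ^ 2 ^ k : ℕ) : ZMod (6700417 ^ 2)) = ((1 : ℕ) : ZMod (6700417 ^ 2)) := by
          rw [ZMod.natCast_eq_natCast_iff]
          exact ((Nat.modEq_iff_dvd' Nat.one_le_two_pow).mpr hc2).symm
        push_cast at h1
        exact_mod_cast h1
      have hu : u ^ 2 ^ k = 1 := by
        apply Units.ext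
        rw [Units.val_pow_eq_pow_val, Units.val_one, hu_def, ZMod.coe_unitOfCoprime]
        exact_mod_cast hu2
      have hord1 : orderOf u ∣ 2 ^ k := orderOf_dvd_of_pow_eq_one hu
      have hord2 : orderOf u ∣ Nat.totient (6700417 ^ 2) :=
        orderOf_dvd_of_pow_eq_one (ZMod.pow_totient u)
      have htot : Nat.totient (6700417 ^ 2) = 6700417 * 6700416 := by
        rw [Nat.totient_prime_pow hp (by norm_num)]
        norm_num
      obtain ⟨j, hj, hje⟩ := (Nat.dvd_prime_pow Nat.prime_two).mp hord1
      have hj7 : j ≤ 7 := by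
        by_contra hj8
        have h8 : (2 ^ 8 : ℕ) ∣ 6700417 * 6700416 := by
          have hstep : (2 ^ 8 : ℕ) ∣ 2 ^ j := pow_dvd_pow 2 (by omega)
          refine hstep.trans ?_
          rw [← hje, ← htot]
          exact hord2
        norm_num at h8
      have hdiv : orderOf u ∣ 128 := by
        rw [hje, show (128 : ℕ) = 2 ^ 7 from rfl]
        exact pow_dvd_pow 2 hj7
      have h128 : u ^ (128 : ℕ) = 1 := orderOf_dvd_iff_pow_eq_one.mp hdiv
      have h128' : ((2 ^ 128 : ℕ) : ZMod (6700417 ^ 2)) = ((1 : ℕ) : ZMod (6700417 ^ 2)) := by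
        have := congrArg (Units.val) h128
        rw [Units.val_pow_eq_pow_val, Units.val_one, hu_def, ZMod.coe_unitOfCoprime] at this
        push_cast
        exact_mod_cast this
      rw [ZMod.natCast_eq_natCast_iff] at h128'
      have hfin : (6700417 ^ 2 : ℕ) ∣ 2 ^ 128 - 1 :=
        (Nat.modEq_iff_dvd' Nat.one_le_two_pow).mp h128'.symm
      norm_num at hfin
    -- multiplicativity: 3 divides beta M, contradiction
    have hBdef : 6700417 * (M / 6700417) = M := Nat.mul_div_cancel' hdM
    have hpB : ¬ (6700417 : ℕ) ∣ (M / 6700417) := by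
      intro hc
      exact hsq (by rw [pow_two, ← hBdef]; exact mul_dvd_mul_left _ hc)
    have hcop : Nat.Coprime 6700417 (M / 6700417) :=
      (Nat.Prime.coprime_iff_not_dvd hp).mpr hpB
    have hbM : beta M = beta 6700417 * beta (M / 6700417) := by
      conv_lhs => rw [← hBdef]
      exact beta_mult hcop
    have h3d : (3 : ℤ) ∣ beta M := by
      rw [hbM, beta_prime hp]
      exact Dvd.dvd.mul_right ⟨2233472, by norm_num⟩ _
    rw [hnn] at h3d
    have h3n : (3 : ℕ) ∣ 2 ^ (2 ^ k - 2) := by exact_mod_cast h3d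
    have := Nat.Prime.dvd_of_dvd_pow (p := 3) (by norm_num) h3n
    norm_num at this
  · intro h
    have betaN_eq_of : ∀ {n v : ℕ}, beta n = (v : ℤ) → betaN n = v := by
      intro n v hv
      rw [betaN, hv, Int.toNat_natCast]
    simp only [Finset.mem_insert, Finset.mem_singleton] at h
    rcases h with rfl | rfl | rfl | rfl | rfl
    · rw [show (2 ^ 2 ^ 1 - 1) / 3 = 1 from by norm_num,
        betaN_eq_of (by rw [beta_one]; norm_num : beta 1 = ((1 : ℕ) : ℤ))]
      norm_num
    · rw [show (2 ^ 2 ^ 2 - 1) / 3 = 5 from by norm_num,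
        betaN_eq_of (by rw [beta_prime (by norm_num)]; norm_num : beta 5 = ((4 : ℕ) : ℤ))]
      norm_num
    · rw [show (2 ^ 2 ^ 3 - 1) / 3 = 85 from by norm_num,
        betaN_eq_of (show beta 85 = ((64 : ℕ) : ℤ) from by
          rw [show (85 : ℕ) = 5 * 17 from by norm_num, beta_mult (by norm_num),
            beta_prime (by norm_num), beta_prime (by norm_num)]
          norm_num)]
      norm_num
    · rw [show (2 ^ 2 ^ 4 - 1) / 3 = 21845 from by norm_num,
        betaN_eq_of (show beta 21845 = ((16384 : ℕ) : ℤ) from by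
          rw [show (21845 : ℕ) = 5 * (17 * 257) from by norm_num, beta_mult (by norm_num),
            beta_mult (by norm_num), beta_prime (by norm_num), beta_prime (by norm_num),
            beta_prime (by norm_num)]
          norm_num)]
      norm_num
    · rw [show (2 ^ 2 ^ 5 - 1) / 3 = 1431655765 from by norm_num,
        betaN_eq_of (show beta 1431655765 = ((1073741824 : ℕ) : ℤ) from by
          rw [show (1431655765 : ℕ) = 5 * (17 * (257 * 65537)) from by norm_num,
            beta_mult (by norm_num), beta_mult (by norm_num), beta_mult (by norm_num),
            beta_prime (by norm_num), beta_prime (by norm_num), beta_prime (by norm_num),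
            beta_prime (by norm_num)]
          norm_num)]
      norm_num
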